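/- For a CTOQW induced by a coin (C,A)_H of dimension 2, if the auxiliary Lindblad operator L(ρ) = -i[H,ρ] - (1/2){C*C + A*A, ρ} + CρC* + AρA* has two distinct stationary density matrices, then C and A share two orthogonal eigenvectors (are simultaneously diagonalizable in an orthonormal basis of ℂ²). -/

import Mathlib

open Matrix ComplexOrder

set_option maxHeartbeats 1000000 in
/-- For a CTOQW induced by a coin `(C,A)_H` of dimension 2: if the auxiliary Lindblad
operator `L(ρ) = -i[H,ρ] - (1/2){C*C + A*A, ρ} + CρC* + AρA*` admits two distinct
stationary density matrices, then `C` and `A` share two orthogonal eigenvectors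
(they are simultaneously diagonalizable in an orthonormal basis of `ℂ²`). -/
theorem coin_two_stationary_states_simultaneously_diagonalizable
    (C A H : Matrix (Fin 2) (Fin 2) ℂ) (hH : H.IsHermitian)
    (L : Matrix (Fin 2) (Fin 2) ℂ → Matrix (Fin 2) (Fin 2) ℂ)
    (hL : ∀ ρ, L ρ =
      -(Complex.I • (H * ρ - ρ * H)) -
        (1 / 2 : ℂ) • ((Cᴴ * C + Aᴴ * A) * ρ + ρ * (Cᴴ * C + Aᴴ * A)) +
        C * ρ * Cᴴ + A * ρ * Aᴴ)
    (ρ₁ ρ₂ : Matrix (Fin 2) (Fin 2) ℂ)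
    (hρ₁ : ρ₁.PosSemidef) (hρ₁1 : ρ₁.trace = 1) (hρ₁L : L ρ₁ = 0)
    (hρ₂ : ρ₂.PosSemidef) (hρ₂1 : ρ₂.trace = 1) (hρ₂L : L ρ₂ = 0)
    (hne : ρ₁ ≠ ρ₂) :
    ∃ u v : Fin 2 → ℂ, u ≠ 0 ∧ v ≠ 0 ∧ (∑ x, star (u x) * v x) = 0 ∧
      (∃ c₁ : ℂ, C.mulVec u = c₁ • u) ∧ (∃ c₂ : ℂ, C.mulVec v = c₂ • v) ∧
      (∃ a₁ : ℂ, A.mulVec u = a₁ • u) ∧ (∃ a₂ : ℂ, A.mulVec v = a₂ • v) := by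
  classical
  set δ : Matrix (Fin 2) (Fin 2) ℂ := ρ₁ - ρ₂ with hδdef
  have hδH : δ.IsHermitian := hρ₁.1.sub hρ₂.1
  have hδtr : δ.trace = 0 := by
    simp [hδdef, Matrix.trace_sub, hρ₁1, hρ₂1]
  have hδne : δ ≠ 0 := sub_ne_zero.mpr hne
  -- L(δ) = 0
  have hδL :
      -(Complex.I • (H * δ - δ * H)) -
        (1 / 2 : ℂ) • ((Cᴴ * C + Aᴴ * A) * δ + δ * (Cᴴ * C + Aᴴ * A)) +
        C * δ * Cᴴ + A * δ * Aᴴ = 0 := by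
    have h1 := hρ₁L; have h2 := hρ₂L
    rw [hL] at h1 h2
    have := sub_eq_zero.mpr (h1.trans h2.symm)
    rw [← this]
    simp only [hδdef]
    simp only [Matrix.mul_sub, Matrix.sub_mul, smul_sub, smul_add]
    abel
  -- spectral data
  set U : Matrix (Fin 2) (Fin 2) ℂ := (hδH.eigenvectorUnitary : Matrix (Fin 2) (Fin 2) ℂ)
    with hUdef
  set V : Matrix (Fin 2) (Fin 2) ℂ := star U with hVdef
  have hVU : V * U = 1 := by
    rw [hVdef, hUdef]; exact hδH.eigenvectorUnitary.2.1
  have hUV : U * V = 1 := by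
    rw [hVdef, hUdef]; exact hδH.eigenvectorUnitary.2.2
  set d : Fin 2 → ℂ := fun i => (hδH.eigenvalues i : ℂ) with hddef
  set D : Matrix (Fin 2) (Fin 2) ℂ := Matrix.diagonal d with hDdef
  have hspec : δ = U * D * V := by
    have := hδH.spectral_theorem
    simpa [hUdef, hVdef, hDdef, hddef, Function.comp_def] using this
  -- conjugation map
  set e : Matrix (Fin 2) (Fin 2) ℂ → Matrix (Fin 2) (Fin 2) ℂ := fun M => V * M * U
    with hedef
  have cancelUV : ∀ X : Matrix (Fin 2) (Fin 2) ℂ, U * (V * X) = X := by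
    intro X; rw [← Matrix.mul_assoc, hUV, Matrix.one_mul]
  have cancelVU : ∀ X : Matrix (Fin 2) (Fin 2) ℂ, V * (U * X) = X := by
    intro X; rw [← Matrix.mul_assoc, hVU, Matrix.one_mul]
  have e_mul : ∀ X Y, e (X * Y) = e X * e Y := by
    intro X Y
    simp only [hedef]
    simp only [Matrix.mul_assoc, cancelUV]
  have hUc : Uᴴ = V := by rw [hVdef, Matrix.star_eq_conjTranspose]
  have hVc : Vᴴ = U := by
    rw [hVdef, Matrix.star_eq_conjTranspose, Matrix.conjTranspose_conjTranspose]
  have e_star : ∀ X, e Xᴴ = (e X)ᴴ := by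
    intro X
    simp only [hedef, Matrix.conjTranspose_mul, Matrix.conjTranspose_conjTranspose,
      hUc, hVc, Matrix.mul_assoc]
  have e_delta : e δ = D := by
    simp only [hedef, hspec]
    simp only [Matrix.mul_assoc, cancelVU, hVU, Matrix.mul_one]
  set Cp := e C with hCp
  set Ap := e A with hAp
  set Hp := e H with hHp
  -- conjugated equation
  have e_add : ∀ X Y, e (X + Y) = e X + e Y := by
    intro X Y; simp only [hedef]; rw [Matrix.mul_add, Matrix.add_mul]
  have e_sub : ∀ X Y, e (X - Y) = e X - e Y := by
    intro X Y; simp only [hedef]; rw [Matrix.mul_sub, Matrix.sub_mul]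
  have e_neg : ∀ X, e (-X) = -(e X) := by
    intro X; simp only [hedef]; rw [Matrix.mul_neg, Matrix.neg_mul]
  have e_smul : ∀ (a : ℂ) (X), e (a • X) = a • e X := by
    intro a X; simp only [hedef]; rw [mul_smul_comm, smul_mul_assoc]
  have key :
      -(Complex.I • (Hp * D - D * Hp)) -
        (1 / 2 : ℂ) • ((Cpᴴ * Cp + Apᴴ * Ap) * D + D * (Cpᴴ * Cp + Apᴴ * Ap)) +
        Cp * D * Cpᴴ + Ap * D * Apᴴ = 0 := by
    have h0 : e (-(Complex.I • (H * δ - δ * H)) -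
        (1 / 2 : ℂ) • ((Cᴴ * C + Aᴴ * A) * δ + δ * (Cᴴ * C + Aᴴ * A)) +
        C * δ * Cᴴ + A * δ * Aᴴ) = 0 := by
      rw [hδL]; simp [hedef]
    simp only [e_add, e_sub, e_neg, e_smul, e_mul, e_star, e_delta] at h0
    exact h0
  -- eigenvalues
  set lam : ℝ := hδH.eigenvalues 0 with hlamdef
  have htrsum : hδH.eigenvalues 0 + hδH.eigenvalues 1 = 0 := by
    have : δ.trace = (hδH.eigenvalues 0 : ℂ) + (hδH.eigenvalues 1 : ℂ) := by
      conv_lhs => rw [hspec]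
      rw [Matrix.trace_mul_cycle, hVU, Matrix.one_mul]
      simp [hDdef, Matrix.trace, hddef, Matrix.diag, Fin.sum_univ_two]
    rw [hδtr] at this
    exact_mod_cast this.symm
  have hlam1 : hδH.eigenvalues 1 = -lam := by rw [hlamdef]; linarith
  have hlamne : lam ≠ 0 := by
    intro h
    apply hδne
    have hD0 : D = 0 := by
      have hd0 : d = fun _ => 0 := by
        funext i
        fin_cases i <;> simp [hddef, ← hlamdef, h, hlam1]
      rw [hDdef, hd0, Matrix.diagonal_zero]
    rw [hspec, hD0, Matrix.mul_zero, Matrix.zero_mul]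
  -- entry (1,1)
  have h11 : (-(Complex.I • (Hp * D - D * Hp)) -
        (1 / 2 : ℂ) • ((Cpᴴ * Cp + Apᴴ * Ap) * D + D * (Cpᴴ * Cp + Apᴴ * Ap)) +
        Cp * D * Cpᴴ + Ap * D * Apᴴ) 1 1 = 0 := by
    rw [key]; simp
  simp only [Matrix.add_apply, Matrix.sub_apply, Matrix.neg_apply, Matrix.smul_apply,
    Matrix.mul_apply, Matrix.conjTranspose_apply, Fin.sum_univ_two, hDdef,
    Matrix.diagonal_apply, smul_eq_mul, hddef, hlam1, ← hlamdef] at h11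
  norm_num at h11
  have key2 : (lam : ℂ) *
      (Cp 0 1 * (starRingEnd ℂ) (Cp 0 1) + Cp 1 0 * (starRingEnd ℂ) (Cp 1 0) +
       Ap 0 1 * (starRingEnd ℂ) (Ap 0 1) + Ap 1 0 * (starRingEnd ℂ) (Ap 1 0)) = 0 := by
    linear_combination h11
  rw [Complex.mul_conj, Complex.mul_conj, Complex.mul_conj, Complex.mul_conj] at key2
  have hsum : Complex.normSq (Cp 0 1) + Complex.normSq (Cp 1 0) +
      Complex.normSq (Ap 0 1) + Complex.normSq (Ap 1 0) = 0 := by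
    rcases mul_eq_zero.mp key2 with h | h
    · exact absurd (by exact_mod_cast h) hlamne
    · exact_mod_cast h
  have hc01 : Cp 0 1 = 0 := by
    rw [← Complex.normSq_eq_zero]
    linarith [hsum, Complex.normSq_nonneg (Cp 0 1), Complex.normSq_nonneg (Cp 1 0),
      Complex.normSq_nonneg (Ap 0 1), Complex.normSq_nonneg (Ap 1 0)]
  have hc10 : Cp 1 0 = 0 := by
    rw [← Complex.normSq_eq_zero]
    linarith [hsum, Complex.normSq_nonneg (Cp 0 1), Complex.normSq_nonneg (Cp 1 0),
      Complex.normSq_nonneg (Ap 0 1), Complex.normSq_nonneg (Ap 1 0)]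
  have ha01 : Ap 0 1 = 0 := by
    rw [← Complex.normSq_eq_zero]
    linarith [hsum, Complex.normSq_nonneg (Cp 0 1), Complex.normSq_nonneg (Cp 1 0),
      Complex.normSq_nonneg (Ap 0 1), Complex.normSq_nonneg (Ap 1 0)]
  have ha10 : Ap 1 0 = 0 := by
    rw [← Complex.normSq_eq_zero]
    linarith [hsum, Complex.normSq_nonneg (Cp 0 1), Complex.normSq_nonneg (Cp 1 0),
      Complex.normSq_nonneg (Ap 0 1), Complex.normSq_nonneg (Ap 1 0)]
  -- build the eigenvectors: columns of U
  refine ⟨fun i => U i 0, fun i => U i 1, ?_, ?_, ?_, ?_, ?_, ?_, ?_⟩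
  · intro h
    have h1 : (V * U) 0 0 = 1 := by rw [hVU]; simp
    rw [Matrix.mul_apply] at h1
    have : ∀ k, U k 0 = 0 := fun k => congrFun h k
    simp [this] at h1
  · intro h
    have h1 : (V * U) 1 1 = 1 := by rw [hVU]; simp
    rw [Matrix.mul_apply] at h1
    have : ∀ k, U k 1 = 0 := fun k => congrFun h k
    simp [this] at h1
  · have h1 : (V * U) 0 1 = 0 := by rw [hVU]; simp
    rw [Matrix.mul_apply] at h1
    simpa [hVdef, Matrix.star_apply] using h1
  all_goals {
    first
    | (refine ⟨Cp 0 0, ?_⟩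
       have hCU : C * U = U * Cp := by
         rw [hCp, hedef, ← Matrix.mul_assoc, cancelUV]
       funext i
       have := congrFun (congrFun hCU i) 0
       simp only [Matrix.mul_apply, Fin.sum_univ_two] at this
       simp only [Matrix.mulVec, dotProduct, Fin.sum_univ_two, Pi.smul_apply,
         smul_eq_mul]
       rw [this, hc10]
       ring)
    | (refine ⟨Cp 1 1, ?_⟩
       have hCU : C * U = U * Cp := by
         rw [hCp, hedef, ← Matrix.mul_assoc, cancelUV]
       funext i
       have := congrFun (congrFun hCU i) 1
       simp only [Matrix.mul_apply, Fin.sum_univ_two] at this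
       simp only [Matrix.mulVec, dotProduct, Fin.sum_univ_two, Pi.smul_apply,
         smul_eq_mul]
       rw [this, hc01]
       ring)
    | (refine ⟨Ap 0 0, ?_⟩
       have hAU : A * U = U * Ap := by
         rw [hAp, hedef, ← Matrix.mul_assoc, cancelUV]
       funext i
       have := congrFun (congrFun hAU i) 0
       simp only [Matrix.mul_apply, Fin.sum_univ_two] at this
       simp only [Matrix.mulVec, dotProduct, Fin.sum_univ_two, Pi.smul_apply,
         smul_eq_mul]
       rw [this, ha10]
       ring)
    | (refine ⟨Ap 1 1, ?_⟩
       have hAU : A * U = U * Ap := by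
         rw [hAp, hedef, ← Matrix.mul_assoc, cancelUV]
       funext i
       have := congrFun (congrFun hAU i) 1
       simp only [Matrix.mul_apply, Fin.sum_univ_two] at this
       simp only [Matrix.mulVec, dotProduct, Fin.sum_univ_two, Pi.smul_apply,
         smul_eq_mul]
       rw [this, ha01]
       ring)
  }
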